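/- For every real α with 0 < α < 0.1142, with p = (1+√5)/2 and q = 1, every (complex) eigenvalue of the matrix M(α,p,q) has absolute value strictly less than 1; i.e., the spectral radius of M(α,p,q) is strictly less than 1. -/

import Mathlib

noncomputable section

/-- The matrix `M(α, p, q)` of the recurrence `S(n+2) = S(n) · M`. -/
def Mmat (α p q : ℝ) : Matrix (Fin 3) (Fin 3) ℝ :=
  !![p ^ (-2 : ℤ) * q ^ (-2 : ℤ) + α * q⁻¹, α * p * q⁻¹ + α ^ 2 * p ^ 4, 0;
     p ^ (-2 : ℤ) * q ^ (-2 : ℤ) + α * q⁻¹, α * p * q⁻¹ + α ^ 2 * p ^ 4 + α * p * q,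
       α * q + p ^ (-2 : ℤ) * q ^ 2;
     0, α ^ 2 * p ^ 4 + α * p * q, α * q + p ^ (-2 : ℤ) * q ^ 2]

attribute [local instance] Matrix.linftyOpNormedRing Matrix.linftyOpNormedAlgebra

namespace Aux

/-- the conjugated matrix over ℝ -/
def Nmat (α : ℝ) : Matrix (Fin 3) (Fin 3) ℝ :=
  Matrix.diagonal ![1, (1.836)⁻¹, 1] * Mmat α ((1 + Real.sqrt 5) / 2) 1 *
    Matrix.diagonal ![1, 1.836, 1]

lemma s_sq : Real.sqrt 5 * Real.sqrt 5 = 5 := Real.mul_self_sqrt (by norm_num)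

lemma s_lb : (2.236 : ℝ) < Real.sqrt 5 := by
  have : ((2.236 : ℝ))^2 < 5 := by norm_num
  nlinarith [Real.sq_sqrt (show (5:ℝ) ≥ 0 by norm_num), Real.sqrt_nonneg 5]

lemma s_ub : Real.sqrt 5 < 2.2361 := by
  nlinarith [Real.sq_sqrt (show (5:ℝ) ≥ 0 by norm_num), Real.sqrt_nonneg 5]

lemma pinv_eq : ((1 + Real.sqrt 5) / 2) ^ (-2 : ℤ) = (3 - Real.sqrt 5) / 2 := by
  have h : ((1 + Real.sqrt 5) / 2) ^ (2 : ℕ) = (3 + Real.sqrt 5) / 2 := by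
    have := s_sq; ring_nf; nlinarith [s_sq]
  rw [show (-2 : ℤ) = -(2:ℕ) by norm_num, zpow_neg, zpow_natCast, h]
  rw [inv_eq_iff_eq_inv, eq_comm, inv_eq_iff_eq_inv, eq_comm]
  rw [eq_div_iff (by norm_num)]
  field_simp
  nlinarith [s_sq, s_lb]

lemma norm_N_lt (α : ℝ) (hα0 : 0 < α) (hα1 : α < 0.1142) : ‖Nmat α‖₊ < 1 := by
  rw [Matrix.linfty_opNNNorm_def]
  refine (Finset.sup_lt_iff (by norm_num)).mpr fun i _ => ?_
  rw [← NNReal.coe_lt_coe]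
  push_cast [coe_nnnorm, Real.norm_eq_abs]
  have hs := s_sq
  have hl := s_lb
  have hu := s_ub
  have h2 : (((1 + Real.sqrt 5) / 2) ^ 2)⁻¹ = (3 - Real.sqrt 5) / 2 := by
    rw [show ((1 + Real.sqrt 5) / 2) ^ 2 = (3 + Real.sqrt 5) / 2 by linear_combination (1/4) * hs]
    rw [inv_eq_iff_eq_inv, eq_comm, inv_eq_iff_eq_inv, eq_comm, eq_div_iff (by norm_num)]
    field_simp
    linear_combination hs
  have h4 : ((1 + Real.sqrt 5) / 2) ^ 4 = (7 + 3 * Real.sqrt 5) / 2 := by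
    linear_combination ((Real.sqrt 5 * Real.sqrt 5 + 4 * Real.sqrt 5 + 11) / 16) * hs
  have key : ∀ x : ℝ, x = (3 - Real.sqrt 5) / 2 + α + (α * ((1 + Real.sqrt 5) / 2) +
      α ^ 2 * ((7 + 3 * Real.sqrt 5) / 2)) * 1.836 → x < 1 := by
    intro x hx
    rw [hx]
    nlinarith [mul_pos (show (0:ℝ) < 0.1142 - α by linarith) (show (0:ℝ) < Real.sqrt 5 - 2.236 by linarith),
      mul_pos hα0 (show (0:ℝ) < Real.sqrt 5 - 2.236 by linarith), mul_pos hα0 hα0,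
      sq_nonneg (α - 0.1142), mul_pos (mul_pos hα0 hα0) (show (0:ℝ) < Real.sqrt 5 - 2.236 by linarith)]
  have h2' : (((1 + Real.sqrt 5) / 2) ^ (2 : ℤ))⁻¹ = (3 - Real.sqrt 5) / 2 := by
    rw [show (2 : ℤ) = ((2 : ℕ) : ℤ) from rfl, zpow_natCast]; exact h2
  have h2g : (Real.goldenRatio + 1)⁻¹ = (3 - Real.sqrt 5) / 2 := by
    show ((1 + Real.sqrt 5) / 2 + 1)⁻¹ = _
    rw [← h2]; congr 1; linear_combination (-1/4) * hs
  fin_cases i <;> simp [Nmat, Mmat, Matrix.mul_apply, Fin.sum_univ_three]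
  · rw [h2g, h4, abs_of_nonneg (by nlinarith), abs_of_nonneg (by nlinarith)]
    exact key _ (by ring)
  · rw [h2g, h4, abs_of_nonneg (by nlinarith), abs_of_nonneg (by nlinarith),
      abs_of_nonneg (by nlinarith), abs_of_nonneg (by nlinarith)]
    nlinarith [mul_pos (show (0:ℝ) < 0.1142 - α by linarith)
        (show (0:ℝ) < Real.sqrt 5 - 2.236 by linarith),
      mul_pos hα0 (show (0:ℝ) < Real.sqrt 5 - 2.236 by linarith), mul_pos hα0 hα0,
      sq_nonneg (α - 0.1142),
      mul_pos (mul_pos hα0 hα0) (show (0:ℝ) < Real.sqrt 5 - 2.236 by linarith)]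
  · rw [h2g, h4, abs_of_nonneg (by nlinarith), abs_of_nonneg (by nlinarith),
      abs_of_nonneg (by nlinarith)]
    exact key _ (by ring)

end Aux

open Aux in

/-- For every real `α` with `0 < α < 0.1142`, with `p = (1+√5)/2` and
`q = 1`, every complex eigenvalue of `M(α,p,q)` has absolute value strictly less than
`1`; i.e. the spectral radius of `M(α,p,q)` is strictly less than `1`. -/
theorem eigenvalues_Mmat_lt_one (α : ℝ) (hα0 : 0 < α) (hα1 : α < 0.1142) :
    (∀ z ∈ spectrum ℂ ((Mmat α ((1 + Real.sqrt 5) / 2) 1).map (Complex.ofReal ·)),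
      ‖z‖ < 1) ∧
    spectralRadius ℂ ((Mmat α ((1 + Real.sqrt 5) / 2) 1).map (Complex.ofReal ·)) < 1 := by
  set Mc := (Mmat α ((1 + Real.sqrt 5) / 2) 1).map (Complex.ofReal ·) with hMc
  set Nc := (Nmat α).map (Complex.ofReal ·) with hNc
  have huv : Matrix.diagonal (α := ℂ) ![1, 1.836, 1] * Matrix.diagonal ![1, (1.836)⁻¹, 1] = 1 := by
    ext i j
    fin_cases i <;> fin_cases j <;>
      simp [Matrix.mul_apply, Fin.sum_univ_three, Matrix.one_apply] <;> norm_num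
  have hvu : Matrix.diagonal (α := ℂ) ![1, (1.836)⁻¹, 1] * Matrix.diagonal ![1, 1.836, 1] = 1 := by
    ext i j
    fin_cases i <;> fin_cases j <;>
      simp [Matrix.mul_apply, Fin.sum_univ_three, Matrix.one_apply] <;> norm_num
  set u : (Matrix (Fin 3) (Fin 3) ℂ)ˣ :=
    ⟨Matrix.diagonal ![1, 1.836, 1], Matrix.diagonal ![1, (1.836)⁻¹, 1], huv, hvu⟩ with hu
  have hconj : (u⁻¹).val * Mc * u.val = Nc := by
    show Matrix.diagonal ![1, (1.836)⁻¹, 1] * Mc * Matrix.diagonal ![1, 1.836, 1] = Nc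
    rw [hMc, hNc, Nmat]
    have : ((fun x : ℝ => (Complex.ofReal x)) : ℝ → ℂ) = ⇑Complex.ofRealHom := rfl
    have hd1 : (Matrix.diagonal ![1, (1.836:ℝ)⁻¹, 1]).map ⇑Complex.ofRealHom =
        Matrix.diagonal ![1, (1.836:ℂ)⁻¹, 1] := by
      ext i j; fin_cases i <;> fin_cases j <;> simp [Matrix.diagonal] <;> norm_num [Complex.ofReal_inv] <;> push_cast <;> norm_num
    have hd2 : (Matrix.diagonal ![1, (1.836:ℝ), 1]).map ⇑Complex.ofRealHom =
        Matrix.diagonal ![1, (1.836:ℂ), 1] := by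
      ext i j; fin_cases i <;> fin_cases j <;> simp [Matrix.diagonal] <;> norm_num [Complex.ofReal_inv] <;> push_cast <;> norm_num
    rw [this, Matrix.map_mul, Matrix.map_mul, hd1, hd2]
  have hspec : spectrum ℂ Mc = spectrum ℂ Nc := by
    rw [← hconj, spectrum.units_conjugate']
  have hnn : ‖Nc‖₊ = ‖Nmat α‖₊ := by
    rw [Matrix.linfty_opNNNorm_def, Matrix.linfty_opNNNorm_def]
    congr 1; funext i
    congr 1; funext j
    simp [hNc, Matrix.map_apply]
  have hlt : ‖Nc‖₊ < 1 := hnn ▸ norm_N_lt α hα0 hα1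
  have hltR : ‖Nc‖ < 1 := hlt
  constructor
  · intro z hz
    rw [hspec] at hz
    exact lt_of_le_of_lt (spectrum.norm_le_norm_of_mem hz) hltR
  · have : spectralRadius ℂ Mc = spectralRadius ℂ Nc := by
      unfold spectralRadius; rw [hspec]
    rw [this]
    exact lt_of_le_of_lt (spectrum.spectralRadius_le_nnnorm Nc)
      (by exact_mod_cast hlt)

end
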